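/- Let m be a positive integer and β > 0. Let H and I be independent nonnegative real random variables on a probability space, where H has probability density f_H(h) = m^m h^{m−1} exp(−m h)/(m−1)! on h > 0 (Gamma distribution with integer shape m and rate m). Let L(s) = E[exp(−s I)] denote the Laplace transform of I. Then ℙ( H > β I ) = Σ_{k=0}^{m−1} ( (−m β)^k / k! ) · L^{(k)}(m β), where L^{(k)} denotes the k-th derivative of L. -/

import Mathlib

open MeasureTheory Real ProbabilityTheory Filter Set


lemma pow_mul_exp_neg_le {c : ℝ} (hc : 0 < c) (n : ℕ) {x : ℝ} (hx : 0 ≤ x) :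
    x ^ n * Real.exp (-(c * x)) ≤ n.factorial / c ^ n := by
  have h1 : (c * x) ^ n / n.factorial ≤ Real.exp (c * x) := by
    calc (c * x) ^ n / n.factorial
        ≤ ∑ i ∈ Finset.range (n + 1), (c * x) ^ i / i.factorial :=
          Finset.single_le_sum (f := fun i => (c * x) ^ i / i.factorial)
            (fun i _ => by positivity) (Finset.self_mem_range_succ n)
      _ ≤ Real.exp (c * x) := Real.sum_le_exp_of_nonneg (by positivity) _
  have h2 : Real.exp (c * x) * Real.exp (-(c * x)) = 1 := by
    rw [← Real.exp_add]; simp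
  have h3 : (0:ℝ) < c ^ n := by positivity
  have h4 : (c * x) ^ n = c ^ n * x ^ n := mul_pow c x n
  have h5 : (0:ℝ) < Real.exp (-(c * x)) := Real.exp_pos _
  have hf : (0:ℝ) < n.factorial := by exact_mod_cast n.factorial_pos
  rw [div_le_iff₀ hf] at h1
  rw [le_div_iff₀ h3]
  calc x ^ n * Real.exp (-(c * x)) * c ^ n
      = ((c * x) ^ n) * Real.exp (-(c * x)) := by rw [h4]; ring
    _ ≤ (Real.exp (c * x) * n.factorial) * Real.exp (-(c * x)) :=
        mul_le_mul_of_nonneg_right h1 h5.le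
    _ = n.factorial := by
        rw [mul_comm (Real.exp (c*x)) (n.factorial:ℝ), mul_assoc, h2, mul_one]

lemma integrable_pow_exp {Ω : Type*} [MeasurableSpace Ω] (P : Measure Ω) [IsProbabilityMeasure P]
    {I : Ω → ℝ} (hI : Measurable I) (hI0 : ∀ ω, 0 ≤ I ω)
    {c : ℝ} (hc : 0 < c) (n : ℕ) :
    Integrable (fun ω => I ω ^ n * Real.exp (-(c * I ω))) P := by
  apply Integrable.mono' (integrable_const ((n.factorial : ℝ) / c ^ n))
  · exact ((hI.pow_const n).mul ((hI.const_mul c).neg.exp)).aestronglyMeasurable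
  · filter_upwards with ω
    have h0 := hI0 ω
    rw [Real.norm_eq_abs, abs_of_nonneg (by positivity)]
    exact pow_mul_exp_neg_le hc n (hI0 ω)

lemma hasDerivAt_laplace {Ω : Type*} [MeasurableSpace Ω] (P : Measure Ω) [IsProbabilityMeasure P]
    {I : Ω → ℝ} (hI : Measurable I) (hI0 : ∀ ω, 0 ≤ I ω) (k : ℕ) {s : ℝ} (hs : 0 < s) :
    HasDerivAt (fun u => ∫ ω, (-I ω) ^ k * Real.exp (-(u * I ω)) ∂P)
      (∫ ω, (-I ω) ^ (k + 1) * Real.exp (-(s * I ω)) ∂P) s := by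
  have hmeas : ∀ u : ℝ, AEStronglyMeasurable (fun ω => (-I ω) ^ (k+1) * Real.exp (-(u * I ω))) P :=
    fun u => ((hI.neg.pow_const (k+1)).mul ((hI.const_mul u).neg.exp)).aestronglyMeasurable
  have key := hasDerivAt_integral_of_dominated_loc_of_deriv_le (μ := P) (x₀ := s)
    (F := fun u ω => (-I ω) ^ k * Real.exp (-(u * I ω)))
    (F' := fun u ω => (-I ω) ^ (k + 1) * Real.exp (-(u * I ω)))
    (bound := fun _ => ((k+1).factorial : ℝ) / (s/2) ^ (k+1))
    (s := Metric.ball s (s / 2)) (Metric.ball_mem_nhds _ (by positivity))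
    (Eventually.of_forall fun u =>
      ((hI.neg.pow_const k).mul ((hI.const_mul u).neg.exp)).aestronglyMeasurable)
    ?_ (hmeas s) ?_ (integrable_const _) ?_
  · exact key.2
  · -- integrability at x₀
    have : (fun ω => (-I ω) ^ k * Real.exp (-(s * I ω)))
        = fun ω => (-1:ℝ)^k * (I ω ^ k * Real.exp (-(s * I ω))) := by
      funext ω; rw [neg_pow]; ring
    show Integrable (fun ω => (-I ω) ^ k * Real.exp (-(s * I ω))) P
    rw [this]
    exact (integrable_pow_exp P hI hI0 hs k).const_mul _
  · -- bound
    filter_upwards with ω u hu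
    have h0 := hI0 ω
    have hu2 : s / 2 ≤ u := by
      have := abs_lt.1 (mem_ball_iff_norm.1 hu); linarith [this.1]
    rw [Real.norm_eq_abs, abs_mul, abs_pow, abs_neg, abs_of_nonneg h0,
      Real.abs_exp]
    calc I ω ^ (k+1) * Real.exp (-(u * I ω))
        ≤ I ω ^ (k+1) * Real.exp (-(s/2 * I ω)) := by
          apply mul_le_mul_of_nonneg_left _ (by positivity)
          apply Real.exp_le_exp.2
          nlinarith
      _ ≤ ((k+1).factorial : ℝ) / (s/2) ^ (k+1) := pow_mul_exp_neg_le (by positivity) _ h0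
  · -- differentiability
    filter_upwards with ω u _
    have : HasDerivAt (fun u : ℝ => Real.exp (-(u * I ω))) (-I ω * Real.exp (-(u * I ω))) u := by
      have h1 : HasDerivAt (fun u : ℝ => -(u * I ω)) (-I ω) u := by
        simpa using ((hasDerivAt_id u).mul_const (I ω)).fun_neg
      simpa [mul_comm] using h1.exp
    have h2 := this.const_mul ((-I ω) ^ k)
    refine h2.congr_deriv (Eq.symm ?_)
    rw [pow_succ]; ring

lemma iteratedDeriv_laplace {Ω : Type*} [MeasurableSpace Ω] (P : Measure Ω)
    [IsProbabilityMeasure P]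
    {I : Ω → ℝ} (hI : Measurable I) (hI0 : ∀ ω, 0 ≤ I ω) (k : ℕ) {s : ℝ} (hs : 0 < s) :
    iteratedDeriv k (fun u : ℝ => ∫ ω, Real.exp (-(u * I ω)) ∂P) s
      = ∫ ω, (-I ω) ^ k * Real.exp (-(s * I ω)) ∂P := by
  induction k generalizing s with
  | zero => simp
  | succ k ih =>
    rw [iteratedDeriv_succ]
    have heq : (fun u => iteratedDeriv k (fun u : ℝ => ∫ ω, Real.exp (-(u * I ω)) ∂P) u)
        =ᶠ[nhds s] fun u => ∫ ω, (-I ω) ^ k * Real.exp (-(u * I ω)) ∂P := by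
      filter_upwards [isOpen_Ioi.mem_nhds hs] with u hu
      exact ih hu
    rw [heq.deriv_eq]
    exact (hasDerivAt_laplace P hI hI0 k hs).deriv

lemma gamma_hasDerivAt (m : ℕ) (hm : 0 < m) (u : ℝ) :
    HasDerivAt (fun u : ℝ => -(Real.exp (-(m : ℝ) * u) *
        ∑ k ∈ Finset.range m, ((m : ℝ) * u) ^ k / k.factorial))
      ((m : ℝ) ^ m * u ^ (m - 1) * Real.exp (-(m : ℝ) * u) / (m - 1).factorial) u := by
  obtain ⟨n, rfl⟩ : ∃ n, m = n + 1 := ⟨m - 1, (Nat.succ_pred_eq_of_pos hm).symm⟩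
  set c : ℝ := ((n + 1 : ℕ) : ℝ) with hcdef
  have hc : (0:ℝ) < c := by positivity
  have hE : HasDerivAt (fun u : ℝ => Real.exp (-c * u)) (-c * Real.exp (-c * u)) u := by
    simpa [mul_comm] using ((hasDerivAt_id u).const_mul (-c)).exp
  have hS : HasDerivAt (fun u : ℝ => ∑ k ∈ Finset.range (n+1), (c * u) ^ k / k.factorial)
      (∑ k ∈ Finset.range (n+1), (k * (c * u) ^ (k-1) * c) / k.factorial) u := by
    apply HasDerivAt.fun_sum
    intro k _
    have h1 : HasDerivAt (fun u : ℝ => (c * u) ^ k) (k * (c * u) ^ (k-1) * c) u := by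
      have h0 : HasDerivAt (fun u : ℝ => c * u) c u := by
        simpa using (hasDerivAt_id u).const_mul c
      exact (hasDerivAt_pow k (c * u)).comp u h0
    simpa using h1.div_const (k.factorial : ℝ)
  have hF := ((hE.fun_mul hS).fun_neg)
  refine hF.congr_deriv (Eq.symm ?_)
  -- derivative identity
  have hsum : (∑ k ∈ Finset.range (n+1), ((k : ℝ) * (c * u) ^ (k-1) * c) / k.factorial)
      = c * ∑ k ∈ Finset.range n, (c * u) ^ k / k.factorial := by
    rw [Finset.sum_range_succ']
    simp only [Nat.cast_zero, zero_mul, Nat.factorial_zero]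
    rw [Finset.mul_sum]
    simp only [add_zero, zero_mul, zero_div, Nat.cast_zero]
    apply Finset.sum_congr rfl
    intro i _
    have hfac : ((i+1).factorial : ℝ) = (i+1) * i.factorial := by
      rw [Nat.factorial_succ]; push_cast; ring
    have hip : (0:ℝ) < (i:ℝ) + 1 := by positivity
    have hif : (0:ℝ) < (i.factorial : ℝ) := by exact_mod_cast i.factorial_pos
    field_simp [hfac]
    push_cast
    rw [hfac]
    ring
  rw [hsum]
  rw [Finset.sum_range_succ]
  have hpow : (c * u) ^ n = c ^ n * u ^ n := mul_pow c u n
  have hcm : c ^ (n + 1) = c * c ^ n := by ring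
  have : ((n+1:ℕ) : ℝ) ^ (n+1) = c ^ (n+1) := by norm_num [c]
  simp only [Nat.add_sub_cancel]
  rw [this, hcm, hpow]
  ring

lemma gamma_tail (m : ℕ) (hm : 0 < m) {t : ℝ} (ht : 0 ≤ t) :
    (∫ h in Set.Ioi t, (m : ℝ) ^ m * h ^ (m-1) * Real.exp (-(m : ℝ) * h) / (m-1).factorial)
      = Real.exp (-(m : ℝ) * t) * ∑ k ∈ Finset.range m, ((m : ℝ) * t) ^ k / k.factorial ∧
    IntegrableOn (fun h => (m : ℝ) ^ m * h ^ (m-1) * Real.exp (-(m : ℝ) * h) / (m-1).factorial)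
      (Set.Ioi t) := by
  have hderiv : ∀ x ∈ Set.Ici t, HasDerivAt (fun u : ℝ => -(Real.exp (-(m : ℝ) * u) *
        ∑ k ∈ Finset.range m, ((m : ℝ) * u) ^ k / k.factorial))
      ((m : ℝ) ^ m * x ^ (m - 1) * Real.exp (-(m : ℝ) * x) / (m - 1).factorial) x :=
    fun x _ => gamma_hasDerivAt m hm x
  have hpos : ∀ x ∈ Set.Ioi t, 0 ≤ (m : ℝ) ^ m * x ^ (m - 1) * Real.exp (-(m : ℝ) * x)
      / (m - 1).factorial := by
    intro x hx
    have hx0 : (0:ℝ) ≤ x := le_trans ht (le_of_lt hx)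
    positivity
  have htend : Tendsto (fun u : ℝ => -(Real.exp (-(m : ℝ) * u) *
      ∑ k ∈ Finset.range m, ((m : ℝ) * u) ^ k / k.factorial)) atTop (nhds 0) := by
    rw [show (0:ℝ) = -0 by ring]
    apply Tendsto.neg
    have : (fun u : ℝ => Real.exp (-(m : ℝ) * u) *
        ∑ k ∈ Finset.range m, ((m : ℝ) * u) ^ k / k.factorial)
        = fun u : ℝ => ∑ k ∈ Finset.range m, ((m : ℝ) * u) ^ k * Real.exp (-((m : ℝ) * u))
            / k.factorial := by
      funext u
      rw [Finset.mul_sum]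
      apply Finset.sum_congr rfl
      intro k _
      rw [neg_mul]
      ring
    rw [this]
    rw [show (0:ℝ) = ∑ k ∈ Finset.range m, (0:ℝ) by simp]
    apply tendsto_finset_sum
    intro k _
    have hbase : Tendsto (fun x : ℝ => x ^ k * Real.exp (-x)) atTop (nhds 0) :=
      Real.tendsto_pow_mul_exp_neg_atTop_nhds_zero k
    have hmul : Tendsto (fun u : ℝ => (m : ℝ) * u) atTop atTop := by
      apply Tendsto.const_mul_atTop (by exact_mod_cast hm) tendsto_id
    have := (hbase.comp hmul).div_const (k.factorial : ℝ)
    simpa using this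
  constructor
  · have := integral_Ioi_of_hasDerivAt_of_nonneg' hderiv hpos htend
    rw [this]
    ring
  · exact integrableOn_Ioi_deriv_of_nonneg' hderiv hpos htend

/-- Coverage identity for Nakagami-`m` fading: if `H` and `I` are independent nonnegative
random variables, `H` having the Gamma density `f_H(h) = m^m h^{m−1} e^{−mh}/(m−1)!` on
`h > 0` (integer shape `m`, rate `m`), and `L(s) = E[e^{−sI}]` is the Laplace transform of
`I`, then for any `β > 0`,
`ℙ(H > β I) = ∑_{k=0}^{m−1} ((−mβ)^k / k!) · L^{(k)}(mβ)`. -/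
theorem coverage_prob_gamma_fading {Ω : Type*} [MeasurableSpace Ω]
    (P : Measure Ω) [IsProbabilityMeasure P]
    (H I : Ω → ℝ) (hH : Measurable H) (hI : Measurable I)
    (hindep : IndepFun H I P)
    (hH_nonneg : ∀ ω, 0 ≤ H ω) (hI_nonneg : ∀ ω, 0 ≤ I ω)
    (m : ℕ) (hm : 0 < m) (β : ℝ) (hβ : 0 < β)
    (hH_pdf : Measure.map H P = volume.withDensity (fun h : ℝ =>
      ENNReal.ofReal (if 0 < h then
        (m : ℝ) ^ m * h ^ (m - 1) * Real.exp (-(m : ℝ) * h) / (m - 1).factorial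
      else 0))) :
    P {ω | β * I ω < H ω}
      = ENNReal.ofReal (∑ k ∈ Finset.range m,
          ((-(m : ℝ) * β) ^ k / k.factorial) *
            iteratedDeriv k (fun s : ℝ => ∫ ω, Real.exp (-(s * I ω)) ∂P)
              ((m : ℝ) * β)) := by
  have hmβ : (0:ℝ) < (m:ℝ) * β := by positivity
  set g : ℝ → ℝ := fun i => Real.exp (-(m:ℝ) * (β * i)) *
      ∑ k ∈ Finset.range m, ((m:ℝ) * (β * i)) ^ k / k.factorial with hg
  -- step 1: independence gives product measure
  have hmap : P.map (fun ω => (H ω, I ω)) = (P.map H).prod (P.map I) :=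
    (indepFun_iff_map_prod_eq_prod_map_map hH.aemeasurable hI.aemeasurable).1 hindep
  have hsetmeas : MeasurableSet {p : ℝ × ℝ | β * p.2 < p.1} :=
    measurableSet_lt (measurable_const.mul measurable_snd) measurable_fst
  haveI : IsProbabilityMeasure (P.map I) := Measure.isProbabilityMeasure_map hI.aemeasurable
  haveI : IsProbabilityMeasure (P.map H) := Measure.isProbabilityMeasure_map hH.aemeasurable
  have h1 : P {ω | β * I ω < H ω}
      = (P.map (fun ω => (H ω, I ω))) {p : ℝ × ℝ | β * p.2 < p.1} := by
    rw [Measure.map_apply (hH.prodMk hI) hsetmeas]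
    rfl
  have h2 : (P.map (fun ω => (H ω, I ω))) {p : ℝ × ℝ | β * p.2 < p.1}
      = ∫⁻ i, (P.map H) (Set.Ioi (β * i)) ∂(P.map I) := by
    rw [hmap, Measure.prod_apply_symm hsetmeas]
    rfl
  -- step 2: gamma tail
  have h3 : ∀ i : ℝ, 0 ≤ i → (P.map H) (Set.Ioi (β * i)) = ENNReal.ofReal (g i) := by
    intro i hi
    have hβi : (0:ℝ) ≤ β * i := by positivity
    rw [hH_pdf, withDensity_apply _ measurableSet_Ioi]
    have hcong : ∀ h ∈ Set.Ioi (β * i),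
        ENNReal.ofReal (if 0 < h then
          (m : ℝ) ^ m * h ^ (m - 1) * Real.exp (-(m : ℝ) * h) / (m - 1).factorial else 0)
        = ENNReal.ofReal
          ((m : ℝ) ^ m * h ^ (m - 1) * Real.exp (-(m : ℝ) * h) / (m - 1).factorial) := by
      intro h hh
      rw [if_pos (lt_of_le_of_lt hβi hh)]
    rw [setLIntegral_congr_fun measurableSet_Ioi hcong]
    obtain ⟨hint, hintOn⟩ := gamma_tail m hm hβi
    rw [← ofReal_integral_eq_lintegral_ofReal hintOn ?_]
    · rw [hint]
    · filter_upwards [ae_restrict_mem measurableSet_Ioi] with h hh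
      have h0 : (0:ℝ) ≤ h := le_trans hβi (le_of_lt hh)
      positivity
  have hae : ∀ᵐ i ∂(P.map I), (P.map H) (Set.Ioi (β * i)) = ENNReal.ofReal (g i) := by
    have hnn : ∀ᵐ i ∂(P.map I), 0 ≤ i :=
      (ae_map_iff hI.aemeasurable measurableSet_Ici).2 (ae_of_all _ hI_nonneg)
    filter_upwards [hnn] with i hi using h3 i hi
  have hgmeas : Measurable fun i => ENNReal.ofReal (g i) := by
    apply ENNReal.measurable_ofReal.comp
    fun_prop
  -- step 3: integrability of g ∘ I
  have hrew : (fun ω => g (I ω)) = fun ω => ∑ k ∈ Finset.range m,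
      ((m:ℝ) * β) ^ k / k.factorial * (I ω ^ k * Real.exp (-((m:ℝ) * β * I ω))) := by
    funext ω
    rw [hg]
    simp only
    rw [Finset.mul_sum]
    apply Finset.sum_congr rfl
    intro k _
    have harg : (m:ℝ) * (β * I ω) = (m:ℝ) * β * I ω := by ring
    rw [harg, mul_pow]
    ring
  have hgI_int : Integrable (fun ω => g (I ω)) P := by
    rw [hrew]
    apply integrable_finset_sum
    intro k _
    exact (integrable_pow_exp P hI hI_nonneg hmβ k).const_mul _
  have hgI_nn : ∀ ω, 0 ≤ g (I ω) := by
    intro ω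
    have h0 := hI_nonneg ω
    rw [hg]
    simp only
    positivity
  -- combine
  rw [h1, h2, lintegral_congr_ae hae, lintegral_map hgmeas hI,
    ← ofReal_integral_eq_lintegral_ofReal hgI_int (ae_of_all _ hgI_nn)]
  congr 1
  rw [hrew, integral_finset_sum _ (fun k _ => (integrable_pow_exp P hI hI_nonneg hmβ k).const_mul _)]
  apply Finset.sum_congr rfl
  intro k _
  rw [iteratedDeriv_laplace P hI hI_nonneg k hmβ, ← integral_const_mul]
  apply integral_congr_ae
  filter_upwards with ω
  have hb : ((-(m:ℝ) * β)) ^ k * (-I ω) ^ k = ((m:ℝ) * β) ^ k * I ω ^ k := by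
    rw [← mul_pow, ← mul_pow]
    congr 1
    ring
  show ((m:ℝ) * β) ^ k / k.factorial * (I ω ^ k * Real.exp (-((m:ℝ) * β * I ω)))
      = (-(m:ℝ) * β) ^ k / k.factorial * ((-I ω) ^ k * Real.exp (-((m:ℝ) * β * I ω)))
  rw [div_mul_eq_mul_div, div_mul_eq_mul_div, ← mul_assoc, ← mul_assoc, hb]
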